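/- arXiv:2202.09525 — 9 statements merged into one kernel-verified Lean document; each statement's English description precedes it below -/
import Mathlib

section
/- For bounded operators A, B on a complex Hilbert space H, the following are equivalent: (a) AA* ≤ α²BB* for some α ≥ 0; (b) ran(A) ⊆ ran(B); (c) there exists a bounded operator C with A = BC. -/
open ContinuousLinearMap

section DouglasAux

variable {H : Type*} [NormedAddCommGroup H] [InnerProductSpace ℂ H] [CompleteSpace H]

local notation "⟪" x ", " y "⟫" => @inner ℂ _ _ x y

private lemma douglas_inner_self (B : H →L[ℂ] H) (x : H) :
    ⟪(B ∘L adjoint B) x, x⟫ = ((‖adjoint B x‖ : ℂ) ^ 2) := by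
  have h1 : (B ∘L adjoint B) x = B (adjoint B x) := rfl
  rw [h1, ← adjoint_inner_right B (adjoint B x) x, inner_self_eq_norm_sq_to_K]
  norm_cast

private lemma douglas_norm_ineq {A B : H →L[ℂ] H} {α : ℝ} (hα : 0 ≤ α)
    (h : (((α : ℂ) ^ 2) • (B ∘L adjoint B) - A ∘L adjoint A).IsPositive) (x : H) :
    ‖adjoint A x‖ ≤ α * ‖adjoint B x‖ := by
  have h2 := h.2 x
  rw [reApplyInnerSelf_apply] at h2
  have h3 : (((α : ℂ) ^ 2) • (B ∘L adjoint B) - A ∘L adjoint A) x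
      = ((α : ℂ) ^ 2) • ((B ∘L adjoint B) x) - (A ∘L adjoint A) x := rfl
  rw [h3, inner_sub_left, inner_smul_left, douglas_inner_self B x,
    douglas_inner_self A x] at h2
  have h4 : Complex.re ((starRingEnd ℂ) ((α : ℂ) ^ 2) * (‖adjoint B x‖ : ℂ) ^ 2
      - (‖adjoint A x‖ : ℂ) ^ 2) = α ^ 2 * ‖adjoint B x‖ ^ 2 - ‖adjoint A x‖ ^ 2 := by
    simp [← Complex.ofReal_pow]
  simp only [RCLike.re_to_complex] at h2
  rw [h4] at h2
  nlinarith [norm_nonneg (adjoint A x), norm_nonneg (adjoint B x),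
    mul_nonneg hα (norm_nonneg (adjoint B x))]

private lemma douglas_a_to_b {A B : H →L[ℂ] H} {α : ℝ} (hα : 0 ≤ α)
    (h : ∀ x, ‖adjoint A x‖ ≤ α * ‖adjoint B x‖) :
    LinearMap.range (A : H →ₗ[ℂ] H) ≤ LinearMap.range (B : H →ₗ[ℂ] H) := by
  rintro _ ⟨y, rfl⟩
  set f : H →ₗ[ℂ] H := (adjoint B : H →L[ℂ] H).toLinearMap with hf
  set ψ : H →L[ℂ] ℂ := (innerSL ℂ y) ∘L (adjoint A) with hψ
  have hker : LinearMap.ker f ≤ LinearMap.ker (ψ : H →ₗ[ℂ] ℂ) := by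
    intro x hx
    have hx' : adjoint B x = 0 := hx
    have : ‖adjoint A x‖ ≤ 0 := by simpa [hx'] using h x
    have hA0 : adjoint A x = 0 := by
      have := le_antisymm this (norm_nonneg _)
      simpa using this
    simp [ψ, LinearMap.mem_ker, hA0]
  set φ₀ : ↥(LinearMap.range f) →ₗ[ℂ] ℂ :=
    ((LinearMap.ker f).liftQ (ψ : H →ₗ[ℂ] ℂ) hker) ∘ₗ
      (f.quotKerEquivRange.symm : ↥(LinearMap.range f) →ₗ[ℂ] H ⧸ LinearMap.ker f) with hφ₀
  have key : ∀ (x : H) (hx : f x ∈ LinearMap.range f), φ₀ ⟨f x, hx⟩ = ψ x := by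
    intro x hx
    have h1 : f.quotKerEquivRange.symm ⟨f x, hx⟩ = (LinearMap.ker f).mkQ x :=
      f.quotKerEquivRange_symm_apply_image x hx
    simp only [hφ₀, LinearMap.comp_apply, LinearEquiv.coe_coe, h1]
    rfl
  have hbound : ∀ z : ↥(LinearMap.range f), ‖φ₀ z‖ ≤ (α * ‖y‖) * ‖z‖ := by
    rintro ⟨z, hz⟩
    obtain ⟨x, rfl⟩ := hz
    rw [key x ⟨x, rfl⟩]
    have h1 : ‖ψ x‖ ≤ ‖y‖ * ‖adjoint A x‖ := by
      simpa [ψ] using norm_inner_le_norm (𝕜 := ℂ) y (adjoint A x)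
    have h2 : ‖adjoint A x‖ ≤ α * ‖adjoint B x‖ := h x
    have h3 : ‖(⟨f x, ⟨x, rfl⟩⟩ : ↥(LinearMap.range f))‖ = ‖adjoint B x‖ := rfl
    rw [h3]
    calc ‖ψ x‖ ≤ ‖y‖ * ‖adjoint A x‖ := h1
      _ ≤ ‖y‖ * (α * ‖adjoint B x‖) :=
          mul_le_mul_of_nonneg_left h2 (norm_nonneg y)
      _ = (α * ‖y‖) * ‖adjoint B x‖ := by ring
  set φ : ↥(LinearMap.range f) →L[ℂ] ℂ := φ₀.mkContinuous (α * ‖y‖) hbound with hφ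
  obtain ⟨Φ, hext, -⟩ := exists_extension_norm_eq (LinearMap.range f) φ
  set w : H := (InnerProductSpace.toDual ℂ H).symm Φ with hw
  refine ⟨w, ?_⟩
  refine ext_inner_right ℂ fun x => ?_
  have e1 : ⟪B w, x⟫ = ⟪w, adjoint B x⟫ := (adjoint_inner_right B w x).symm
  have e2 : ⟪w, adjoint B x⟫ = Φ (adjoint B x) := InnerProductSpace.toDual_symm_apply
  have e3 : Φ (adjoint B x) = φ ⟨f x, ⟨x, rfl⟩⟩ := hext ⟨f x, ⟨x, rfl⟩⟩
  have e4 : φ (⟨f x, ⟨x, rfl⟩⟩ : ↥(LinearMap.range f)) = ψ x := key x ⟨x, rfl⟩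
  have e5 : ψ x = ⟪y, adjoint A x⟫ := rfl
  have e6 : ⟪y, adjoint A x⟫ = ⟪A y, x⟫ := adjoint_inner_right A y x
  change ⟪B w, x⟫ = ⟪A y, x⟫
  rw [e1, e2, e3, e4, e5, e6]

private lemma douglas_b_to_c {A B : H →L[ℂ] H}
    (h : LinearMap.range (A : H →ₗ[ℂ] H) ≤ LinearMap.range (B : H →ₗ[ℂ] H)) :
    ∃ C : H →L[ℂ] H, A = B ∘L C := by
  set K : Submodule ℂ H := LinearMap.ker (B : H →ₗ[ℂ] H) with hK
  have hKc : IsClosed (K : Set H) := isClosed_ker B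
  haveI : CompleteSpace K := hKc.completeSpace_coe
  have ex : ∀ x : H, ∃ z : H, z ∈ Kᗮ ∧ B z = A x := by
    intro x
    obtain ⟨y, hy⟩ := h ⟨x, rfl⟩
    refine ⟨y - (K.orthogonalProjectionOnto y : H),
      Submodule.sub_starProjection_mem_orthogonal (K := K) y, ?_⟩
    have hk : B ((K.orthogonalProjectionOnto y : H)) = 0 :=
      (K.orthogonalProjectionOnto y).2
    rw [map_sub, hk, sub_zero]; exact hy
  have uniq : ∀ z₁ z₂, z₁ ∈ Kᗮ → z₂ ∈ Kᗮ → B z₁ = B z₂ → z₁ = z₂ := by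
    intro z₁ z₂ h1 h2 hB
    have hmem : z₁ - z₂ ∈ K ⊓ Kᗮ :=
      ⟨by simp [hK, LinearMap.mem_ker, map_sub, hB], Kᗮ.sub_mem h1 h2⟩
    have : z₁ - z₂ = 0 := by
      have := K.orthogonal_disjoint.eq_bot ▸ hmem
      rwa [K.orthogonal_disjoint.eq_bot, Submodule.mem_bot] at hmem
    exact sub_eq_zero.mp this
  choose c hc1 hc2 using ex
  have hadd : ∀ x y, c (x + y) = c x + c y := by
    intro x y
    refine uniq _ _ (hc1 _) (Kᗮ.add_mem (hc1 x) (hc1 y)) ?_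
    rw [hc2, map_add, map_add, hc2, hc2]
  have hsmul : ∀ (a : ℂ) (x : H), c (a • x) = a • c x := by
    intro a x
    refine uniq _ _ (hc1 _) (Kᗮ.smul_mem a (hc1 x)) ?_
    rw [hc2, map_smul, map_smul, hc2]
  set C₀ : H →ₗ[ℂ] H :=
    { toFun := c, map_add' := hadd, map_smul' := hsmul } with hC₀
  have hgraph : IsClosed (C₀.graph : Set (H × H)) := by
    have hset : (C₀.graph : Set (H × H))
        = {p : H × H | p.2 ∈ Kᗮ} ∩ {p : H × H | B p.2 = A p.1} := by
      ext ⟨x, z⟩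
      simp only [SetLike.mem_coe, LinearMap.mem_graph_iff, Set.mem_inter_iff,
        Set.mem_setOf_eq]
      constructor
      · rintro rfl
        exact ⟨hc1 x, hc2 x⟩
      · rintro ⟨h1, h2⟩
        exact uniq z (c x) h1 (hc1 x) (h2.trans (hc2 x).symm)
    rw [hset]
    exact IsClosed.inter
      (K.isClosed_orthogonal.preimage continuous_snd)
      (isClosed_eq (B.continuous.comp continuous_snd)
        (A.continuous.comp continuous_fst))
  refine ⟨ofIsClosedGraph hgraph, ?_⟩
  ext x
  exact (hc2 x).symm

private lemma douglas_c_to_a {A B : H →L[ℂ] H} (C : H →L[ℂ] H) (hC : A = B ∘L C) :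
    ∃ α : ℝ, 0 ≤ α ∧
      (((α : ℂ) ^ 2) • (B ∘L adjoint B) - A ∘L adjoint A).IsPositive := by
  refine ⟨‖C‖, norm_nonneg _, ?_⟩
  rw [isPositive_iff_complex]
  intro x
  have h3 : ((((‖C‖ : ℂ)) ^ 2) • (B ∘L adjoint B) - A ∘L adjoint A) x
      = ((‖C‖ : ℂ) ^ 2) • ((B ∘L adjoint B) x) - (A ∘L adjoint A) x := rfl
  have hval : ⟪((((‖C‖ : ℂ)) ^ 2) • (B ∘L adjoint B) - A ∘L adjoint A) x, x⟫
      = ((‖C‖ ^ 2 * ‖adjoint B x‖ ^ 2 - ‖adjoint A x‖ ^ 2 : ℝ) : ℂ) := by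
    rw [h3, inner_sub_left, inner_smul_left, douglas_inner_self B x,
      douglas_inner_self A x]
    push_cast
    simp
  rw [hval]
  have hle : ‖adjoint A x‖ ≤ ‖C‖ * ‖adjoint B x‖ := by
    have h1 : adjoint A x = adjoint C (adjoint B x) := by
      rw [hC, adjoint_comp]; rfl
    rw [h1]
    calc ‖adjoint C (adjoint B x)‖ ≤ ‖adjoint C‖ * ‖adjoint B x‖ :=
          (adjoint C).le_opNorm _
      _ = ‖C‖ * ‖adjoint B x‖ := by rw [adjoint.norm_map]
  constructor
  · simp only [RCLike.re_to_complex, Complex.ofReal_re]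
  · simp only [RCLike.re_to_complex, Complex.ofReal_re]
    nlinarith [norm_nonneg (adjoint A x), norm_nonneg (adjoint B x),
      norm_nonneg C]

end DouglasAux

/-- **Douglas's range inclusion theorem.** For bounded operators `A, B` on a complex
Hilbert space `H`, the following are equivalent:
(a) `A A* ≤ α² B B*` for some `α ≥ 0`; (b) `ran A ⊆ ran B`;
(c) there is a bounded operator `C` with `A = B C`. -/
theorem douglas_range_inclusion {H : Type*} [NormedAddCommGroup H]
    [InnerProductSpace ℂ H] [CompleteSpace H] (A B : H →L[ℂ] H) :
    ((∃ α : ℝ, 0 ≤ α ∧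
        (((α : ℂ) ^ 2) • (B ∘L adjoint B) - A ∘L adjoint A).IsPositive) ↔
      LinearMap.range (A : H →ₗ[ℂ] H) ≤ LinearMap.range (B : H →ₗ[ℂ] H)) ∧
    (LinearMap.range (A : H →ₗ[ℂ] H) ≤ LinearMap.range (B : H →ₗ[ℂ] H) ↔
      ∃ C : H →L[ℂ] H, A = B ∘L C) := by
  have hbc : LinearMap.range (A : H →ₗ[ℂ] H) ≤ LinearMap.range (B : H →ₗ[ℂ] H) ↔ ∃ C : H →L[ℂ] H, A = B ∘L C := by
    constructor
    · exact douglas_b_to_c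
    · rintro ⟨C, rfl⟩ _ ⟨x, rfl⟩
      exact ⟨C x, rfl⟩
  refine ⟨⟨?_, ?_⟩, hbc⟩
  · rintro ⟨α, hα, hpos⟩
    exact douglas_a_to_b hα (douglas_norm_ineq hα hpos)
  · intro hb
    obtain ⟨C, hC⟩ := hbc.mp hb
    exact douglas_c_to_a C hC
end

section
/- For a bounded operator T on a complex Hilbert space, ran(T) ⊆ ran(T*) if and only if there exists α ≥ 0 such that ‖T*x‖ ≤ α‖Tx‖ for every x in H. -/
open ContinuousLinearMap

/-- For a bounded operator `T` on a complex Hilbert space, `ran T ⊆ ran T*` iff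
there exists `α ≥ 0` with `‖T* x‖ ≤ α ‖T x‖` for all `x`. -/
theorem range_le_range_adjoint_iff_norm_adjoint_le {H : Type*} [NormedAddCommGroup H]
    [InnerProductSpace ℂ H] [CompleteSpace H] (T : H →L[ℂ] H) :
    LinearMap.range (T : H →ₗ[ℂ] H) ≤ LinearMap.range (adjoint T : H →ₗ[ℂ] H) ↔
      ∃ α : ℝ, 0 ≤ α ∧ ∀ x : H, ‖adjoint T x‖ ≤ α * ‖T x‖ := by
  set A : H →L[ℂ] H := adjoint T with hA
  constructor
  · -- range inclusion ⟹ majorization, via the closed graph theorem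
    intro h
    set N : Submodule ℂ H := LinearMap.ker (A : H →ₗ[ℂ] H) with hN
    have hNclosed : IsClosed (N : Set H) := ContinuousLinearMap.isClosed_ker A
    haveI : CompleteSpace N := hNclosed.completeSpace_coe
    -- existence and uniqueness of a preimage in Nᗮ
    have hexu : ∀ x : H, ∃! y : H, y ∈ Nᗮ ∧ A y = T x := by
      intro x
      obtain ⟨w, hw⟩ := h (LinearMap.mem_range_self (T : H →ₗ[ℂ] H) x)
      obtain ⟨p, hp, q, hq, hpq⟩ := N.exists_add_mem_mem_orthogonal w
      refine ⟨q, ⟨hq, ?_⟩, ?_⟩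
      · have hp0 : A p = 0 := hp
        have : A w = T x := hw
        rw [hpq, map_add, hp0, zero_add] at this
        exact this
      · rintro y ⟨hy, hyA⟩
        have hsub : y - q ∈ N := by
          have : A (y - q) = 0 := by
            rw [map_sub, hyA]
            have hq0 : A q = T x := by
              have : A w = T x := hw
              rw [hpq, map_add, show A p = 0 from hp, zero_add] at this
              exact this
            rw [hq0, sub_self]
          exact this
        have hsub' : y - q ∈ Nᗮ := Submodule.sub_mem _ hy hq
        have : y - q = 0 := by
          have := Submodule.inner_right_of_mem_orthogonal hsub hsub'
          simpa [inner_self_eq_zero] using this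
        exact sub_eq_zero.mp this
    -- the linear map x ↦ unique preimage
    let g : H → H := fun x => (hexu x).choose
    have hg : ∀ x, g x ∈ Nᗮ ∧ A (g x) = T x := fun x => (hexu x).choose_spec.1
    have hguniq : ∀ x y, y ∈ Nᗮ → A y = T x → y = g x := fun x y h1 h2 =>
      (hexu x).choose_spec.2 y ⟨h1, h2⟩
    let C : H →ₗ[ℂ] H :=
      { toFun := g
        map_add' := fun x y => by
          refine ((hexu (x + y)).choose_spec.2 (g x + g y)
            ⟨Submodule.add_mem _ (hg x).1 (hg y).1, by
              rw [map_add, (hg x).2, (hg y).2, map_add]⟩).symm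
        map_smul' := fun c x => by
          refine ((hexu (c • x)).choose_spec.2 (c • g x)
            ⟨Submodule.smul_mem _ _ (hg x).1, by
              rw [map_smul, (hg x).2, map_smul]⟩).symm }
    -- the graph of C is closed
    have hgraph : IsClosed (C.graph : Set (H × H)) := by
      have heq : (C.graph : Set (H × H)) =
          {p : H × H | p.2 ∈ Nᗮ} ∩ {p : H × H | A p.2 - T p.1 = 0} := by
        ext p
        constructor
        · intro hp
          have hp' : p.2 = g p.1 := hp
          refine ⟨show p.2 ∈ Nᗮ by rw [hp']; exact (hg p.1).1, ?_⟩
          simp only [Set.mem_setOf_eq, hp', (hg p.1).2, sub_self]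
        · rintro ⟨h1, h2⟩
          have h2' : A p.2 = T p.1 := by
            have := sub_eq_zero.mp h2; exact this
          exact (hguniq p.1 p.2 h1 h2' : p.2 = g p.1)
      rw [heq]
      refine IsClosed.inter ?_ ?_
      · exact (Submodule.isClosed_orthogonal N).preimage continuous_snd
      · exact isClosed_eq ((A.continuous.comp continuous_snd).sub (T.continuous.comp continuous_fst)) continuous_const
    let C' : H →L[ℂ] H := ContinuousLinearMap.ofIsClosedGraph hgraph
    have hC' : ∀ x, C' x = g x := fun x =>
      congrFun (ContinuousLinearMap.coeFn_ofIsClosedGraph hgraph) x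
    have hAC : A ∘L C' = T := by
      ext x
      simp only [ContinuousLinearMap.comp_apply, hC']
      exact (hg x).2
    have hadj : A = adjoint C' ∘L T := by
      have := congrArg ContinuousLinearMap.adjoint hAC
      rw [ContinuousLinearMap.adjoint_comp, hA, ContinuousLinearMap.adjoint_adjoint] at this
      exact hA.trans this.symm
    refine ⟨‖adjoint C'‖, norm_nonneg _, fun x => ?_⟩
    calc ‖A x‖ = ‖adjoint C' (T x)‖ := by rw [hadj]; rfl
      _ ≤ ‖adjoint C'‖ * ‖T x‖ := (adjoint C').le_opNorm _
  · -- majorization ⟹ range inclusion, via Hahn–Banach and Riesz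
    rintro ⟨α, hα, hbound⟩
    rintro _ ⟨x₀, rfl⟩
    -- define a functional on range T
    by_cases hx0 : T x₀ = 0
    · exact hx0 ▸ (LinearMap.range (A : H →ₗ[ℂ] H)).zero_mem
    -- the functional z ↦ ⟪T x₀, z⟫ kills ker T
    have hker : LinearMap.ker (T : H →ₗ[ℂ] H) ≤
        LinearMap.ker (innerSL ℂ (T x₀) : H →ₗ[ℂ] ℂ) := by
      intro z hz
      have hz' : T z = 0 := hz
      have : (inner ℂ (T x₀) z : ℂ) = inner ℂ x₀ (A z) := by
        rw [hA, ContinuousLinearMap.adjoint_inner_right]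
      have hAz : A z = 0 := by
        have := hbound z
        rw [hz', norm_zero, mul_zero] at this
        exact norm_le_zero_iff.mp this
      simpa [hAz] using this
    -- induced functional on range T (as a linear map)
    let f₀ : H ⧸ LinearMap.ker (T : H →ₗ[ℂ] H) →ₗ[ℂ] ℂ :=
      (LinearMap.ker (T : H →ₗ[ℂ] H)).liftQ (innerSL ℂ (T x₀) : H →ₗ[ℂ] ℂ) hker
    let e := LinearMap.quotKerEquivRange (T : H →ₗ[ℂ] H)
    let f₁ : LinearMap.range (T : H →ₗ[ℂ] H) →ₗ[ℂ] ℂ := f₀ ∘ₗ (e.symm : _ →ₗ[ℂ] _)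
    have hf₁ : ∀ z : H, f₁ ⟨T z, LinearMap.mem_range_self _ z⟩ = inner ℂ (T x₀) z := by
      intro z
      have h1 : e (Submodule.Quotient.mk z) = ⟨T z, LinearMap.mem_range_self _ z⟩ := by
        apply Subtype.ext
        simp [e, LinearMap.quotKerEquivRange_apply_mk]
      have h2 : e.symm ⟨T z, LinearMap.mem_range_self _ z⟩ = Submodule.Quotient.mk z := by
        rw [← h1, LinearEquiv.symm_apply_apply]
      simp only [f₁, LinearMap.comp_apply, LinearEquiv.coe_coe, h2]
      rfl
    -- f₁ is bounded by α ‖x₀‖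
    have hf₁bound : ∀ v : LinearMap.range (T : H →ₗ[ℂ] H), ‖f₁ v‖ ≤ (α * ‖x₀‖) * ‖(v : H)‖ := by
      rintro ⟨v, hv⟩
      obtain ⟨z, rfl⟩ := hv
      show ‖f₁ ⟨T z, LinearMap.mem_range_self (T : H →ₗ[ℂ] H) z⟩‖ ≤ (α * ‖x₀‖) * ‖T z‖
      rw [hf₁ z]
      calc ‖(inner ℂ (T x₀) z : ℂ)‖ = ‖(inner ℂ x₀ (A z) : ℂ)‖ := by
            rw [hA, ContinuousLinearMap.adjoint_inner_right]
        _ ≤ ‖x₀‖ * ‖A z‖ := norm_inner_le_norm _ _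
        _ ≤ ‖x₀‖ * (α * ‖T z‖) := by
            exact mul_le_mul_of_nonneg_left (hbound z) (norm_nonneg _)
        _ = (α * ‖x₀‖) * ‖T z‖ := by ring
    let f : LinearMap.range (T : H →ₗ[ℂ] H) →L[ℂ] ℂ :=
      f₁.mkContinuous (α * ‖x₀‖) hf₁bound
    obtain ⟨gext, hgext, _⟩ := exists_extension_norm_eq (LinearMap.range (T : H →ₗ[ℂ] H)) f
    -- Riesz representation
    let w : H := (InnerProductSpace.toDual ℂ H).symm gext
    have hw : ∀ v : H, (inner ℂ w v : ℂ) = gext v := fun v => by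
      simp [w, InnerProductSpace.toDual_symm_apply]
    have hkey : ∀ z : H, (inner ℂ (A w) z : ℂ) = inner ℂ (T x₀) z := by
      intro z
      rw [hA, ContinuousLinearMap.adjoint_inner_left, hw (T z)]
      have := hgext ⟨T z, LinearMap.mem_range_self _ z⟩
      rw [this]
      have : f ⟨T z, LinearMap.mem_range_self _ z⟩ = f₁ ⟨T z, LinearMap.mem_range_self _ z⟩ := rfl
      rw [this, hf₁ z]
    refine ⟨w, ?_⟩
    have : A w - T x₀ = 0 := by
      rw [← inner_self_eq_zero (𝕜 := ℂ)]
      rw [inner_sub_left]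
      rw [hkey (A w - T x₀)]
      simp [inner_sub_right]
    exact sub_eq_zero.mp this
end

section
/- For a bounded operator T on a complex Hilbert space, TT* ≤ α²T*T for some α ≥ 0 if and only if there exists a nonnegative bounded operator Q with TT* = T*QT. -/
open ContinuousLinearMap

/-- `T T* ≤ α² T* T` for some `α ≥ 0` iff there is a nonnegative bounded operator `Q`
with `T T* = T* Q T`. -/
theorem posinormal_iff_exists_nonneg_factor {H : Type*} [NormedAddCommGroup H]
    [InnerProductSpace ℂ H] [CompleteSpace H] (T : H →L[ℂ] H) :
    (∃ α : ℝ, 0 ≤ α ∧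
        (((α : ℂ) ^ 2) • (adjoint T ∘L T) - T ∘L adjoint T).IsPositive) ↔
      ∃ Q : H →L[ℂ] H, Q.IsPositive ∧
        T ∘L adjoint T = adjoint T ∘L Q ∘L T := by
  constructor
  · rintro ⟨α, hα, hpos⟩
    -- key norm bound
    have hb : ∀ x : H, ‖adjoint T x‖ ≤ α * ‖T x‖ := by
      intro x
      have h := hpos.2 x
      have hre : ((((α : ℂ) ^ 2) • (adjoint T ∘L T) - T ∘L adjoint T).reApplyInnerSelf x)
          = α ^ 2 * ‖T x‖ ^ 2 - ‖adjoint T x‖ ^ 2 := by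
        simp only [reApplyInnerSelf_apply, sub_apply, smul_apply, inner_sub_left,
          inner_smul_left, comp_apply, map_sub]
        rw [show (T ((adjoint T) x)) = ((adjoint (adjoint T)) ((adjoint T) x)) by
              rw [adjoint_adjoint],
          adjoint_inner_left, adjoint_inner_left]
        simp [inner_self_eq_norm_sq, ← Complex.ofReal_pow, Complex.conj_ofReal]
      rw [hre, sub_nonneg] at h
      have h2 := Real.sqrt_le_sqrt h
      rwa [Real.sqrt_sq (norm_nonneg _), ← mul_pow, Real.sqrt_sq (by positivity)] at h2
    have key : ∀ x y : H, T x = T y → adjoint T x = adjoint T y := by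
      intro x y hxy
      have h1 : ‖adjoint T (x - y)‖ ≤ α * ‖T (x - y)‖ := hb _
      rw [map_sub, map_sub, hxy, sub_self, norm_zero, mul_zero] at h1
      exact sub_eq_zero.mp (by rwa [← norm_le_zero_iff])
    -- the range and its closure
    set R : Submodule ℂ H := LinearMap.range (T : H →ₗ[ℂ] H) with hR
    set Rc : Submodule ℂ H := R.topologicalClosure with hRc
    haveI : CompleteSpace Rc := R.isClosed_topologicalClosure.completeSpace_coe
    -- S₀ : R →ₗ H, S₀ (T x) = T* x
    have hmem : ∀ y : R, T (Classical.choose y.2) = (y : H) := fun y =>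
      Classical.choose_spec y.2
    let S₀ : R →ₗ[ℂ] H :=
      { toFun := fun y => adjoint T (Classical.choose y.2)
        map_add' := by
          intro y z
          show adjoint T (Classical.choose (y + z).2)
            = adjoint T (Classical.choose y.2) + adjoint T (Classical.choose z.2)
          rw [← map_add]
          refine key _ _ ?_
          rw [map_add, hmem (y + z), hmem y, hmem z]
          rfl
        map_smul' := by
          intro c y
          show adjoint T (Classical.choose (c • y).2)
            = c • adjoint T (Classical.choose y.2)
          rw [← map_smul]
          refine key _ _ ?_
          rw [map_smul, hmem (c • y), hmem y]
          rfl }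
    have hS₀ : ∀ x : H, S₀ ⟨T x, ⟨x, rfl⟩⟩ = adjoint T x := fun x =>
      key _ _ (hmem ⟨T x, ⟨x, rfl⟩⟩)
    have hS₀bound : ∀ y : R, ‖S₀ y‖ ≤ α * ‖y‖ := by
      intro y
      calc ‖S₀ y‖ ≤ α * ‖T (Classical.choose y.2)‖ := hb _
        _ = α * ‖y‖ := by rw [hmem]; rfl
    let S : R →L[ℂ] H := S₀.mkContinuous α hS₀bound
    -- inclusion R →L Rc
    let e : R →L[ℂ] Rc :=
      { toLinearMap := Submodule.inclusion (R.le_topologicalClosure)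
        cont := continuous_induced_rng.2 continuous_subtype_val }
    have he_iso : Isometry e := AddMonoidHomClass.isometry_of_norm e (fun x => rfl)
    have he_dense : DenseRange e := by
      intro y
      rw [closure_subtype]
      have himg : Subtype.val '' Set.range ⇑e = (R : Set H) := by
        ext z
        constructor
        · rintro ⟨w, ⟨v, rfl⟩, rfl⟩
          exact v.2
        · intro hz
          exact ⟨e ⟨z, hz⟩, ⟨⟨z, hz⟩, rfl⟩, rfl⟩
      rw [himg]
      exact y.2
    have he_ui : IsUniformInducing e := he_iso.isUniformInducing
    let Ext : Rc →L[ℂ] H := S.extend e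
    let A : H →L[ℂ] H := Ext ∘L (Rc.orthogonalProjectionOnto : H →L[ℂ] Rc)
    have hA : ∀ x : H, A (T x) = adjoint T x := by
      intro x
      have hmem' : T x ∈ Rc := R.le_topologicalClosure ⟨x, rfl⟩
      have hproj : (Rc.orthogonalProjectionOnto : H →L[ℂ] Rc) (T x) = ⟨T x, hmem'⟩ := by
        exact Submodule.orthogonalProjectionOnto_mem_subspace_eq_self (⟨T x, hmem'⟩ : Rc)
      have : (⟨T x, hmem'⟩ : Rc) = e ⟨T x, ⟨x, rfl⟩⟩ := rfl
      simp only [A, comp_apply, hproj, this]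
      refine (ContinuousLinearMap.extend_eq S he_dense he_ui _).trans ?_
      exact hS₀ x
    have hAT : adjoint T = A ∘L T := by
      ext x; exact (hA x).symm
    refine ⟨adjoint A ∘L A, ?_, ?_⟩
    · have := isPositive_one.adjoint_conj A
      simpa [one_def] using this
    · have h2 : T ∘L adjoint T = adjoint (A ∘L T) ∘L (A ∘L T) := by
        rw [← hAT, adjoint_adjoint]
      rw [h2, adjoint_comp]
      simp only [comp_assoc]
  · rintro ⟨Q, hQ, hfac⟩
    refine ⟨Real.sqrt ‖Q‖, Real.sqrt_nonneg _, ?_⟩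
    have hα2 : (Real.sqrt ‖Q‖) ^ 2 = ‖Q‖ := Real.sq_sqrt (norm_nonneg _)
    constructor
    · rw [← isSelfAdjoint_iff_isSymmetric, IsSelfAdjoint]
      simp only [star_sub, star_smul, star_eq_adjoint, adjoint_comp, adjoint_adjoint]
      rw [show star ((Real.sqrt ‖Q‖ : ℂ) ^ 2) = ((Real.sqrt ‖Q‖ : ℂ) ^ 2) by
        rw [← Complex.ofReal_pow, Complex.star_def, Complex.conj_ofReal]]
    · intro x
      have hre : ((((Real.sqrt ‖Q‖ : ℂ) ^ 2) • (adjoint T ∘L T) - T ∘L adjoint T).reApplyInnerSelf x)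
          = ‖Q‖ * ‖T x‖ ^ 2 - RCLike.re (inner ℂ (Q (T x)) (T x) : ℂ) := by
        simp only [reApplyInnerSelf_apply, sub_apply, smul_apply, inner_sub_left,
          inner_smul_left, comp_apply, map_sub]
        have hfx : T ((adjoint T) x) = adjoint T (Q (T x)) := by
          have := DFunLike.congr_fun hfac x
          simpa using this
        rw [adjoint_inner_left, hfx, adjoint_inner_left]
        simp [inner_self_eq_norm_sq, ← Complex.ofReal_pow, Complex.conj_ofReal, hα2]
      rw [hre, sub_nonneg]
      calc RCLike.re (inner ℂ (Q (T x)) (T x) : ℂ)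
          ≤ ‖(inner ℂ (Q (T x)) (T x) : ℂ)‖ := RCLike.re_le_norm _
        _ ≤ ‖Q (T x)‖ * ‖T x‖ := norm_inner_le_norm _ _
        _ ≤ (‖Q‖ * ‖T x‖) * ‖T x‖ :=
            mul_le_mul_of_nonneg_right (Q.le_opNorm _) (norm_nonneg _)
        _ = ‖Q‖ * ‖T x‖ ^ 2 := by ring
end

section
/- Let T be a bounded operator on a Hilbert space such that ran(T^n) is closed for every n ≥ 1. If T is posinormal (ran(T) ⊆ ran(T*)) and T is coposinormal (ran(T*) ⊆ ran(T)), then T^n is posinormal and coposinormal for every n ≥ 1, i.e., ran(T^n) = ran(T*^n). -/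
open ContinuousLinearMap

/-- Suppose `ran (T ^ n)` is closed for every `n ≥ 1`. If `T` is posinormal
(`ran T ⊆ ran T*`) and coposinormal (`ran T* ⊆ ran T`), then every power `T ^ n`
is posinormal and coposinormal: `ran (T ^ n) = ran (T*^n)`. -/
theorem pow_posinormal_coposinormal {H : Type*} [NormedAddCommGroup H]
    [InnerProductSpace ℂ H] [CompleteSpace H] (T : H →L[ℂ] H)
    (hcl : ∀ n : ℕ, 1 ≤ n → IsClosed (Set.range (T ^ n)))
    (hpos : LinearMap.range (T : H →ₗ[ℂ] H) ≤ LinearMap.range (adjoint T : H →ₗ[ℂ] H))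
    (hcop : LinearMap.range (adjoint T : H →ₗ[ℂ] H) ≤ LinearMap.range (T : H →ₗ[ℂ] H)) :
    ∀ n : ℕ, 1 ≤ n →
      LinearMap.range ((T ^ n : H →L[ℂ] H) : H →ₗ[ℂ] H) = LinearMap.range (((adjoint T) ^ n : H →L[ℂ] H) : H →ₗ[ℂ] H) := by
  set R : Submodule ℂ H := LinearMap.range (T : H →ₗ[ℂ] H) with hRdef
  have hRT : LinearMap.range (T : H →ₗ[ℂ] H) = R := rfl
  have hRTs : LinearMap.range (adjoint T : H →ₗ[ℂ] H) = R := le_antisymm hcop hpos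
  -- R is a closed submodule
  have hRclosed : IsClosed (R : Set H) := by
    have := hcl 1 le_rfl
    simpa [hRdef, pow_one, LinearMap.coe_range, ContinuousLinearMap.coe_coe] using this
  have : CompleteSpace R := hRclosed.completeSpace_coe
  -- vectors orthogonal to R are killed by T and by adjoint T
  have hkerT : ∀ v ∈ Rᗮ, T v = 0 := by
    intro v hv
    have : ∀ y : H, inner ℂ (T v) y = (0 : ℂ) := by
      intro y
      have h1 : inner ℂ v (adjoint T y) = (0 : ℂ) := by
        have : adjoint T y ∈ R := hRTs ▸ LinearMap.mem_range_self _ y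
        exact (Submodule.mem_orthogonal' R v).mp hv _ this
      calc inner ℂ (T v) y = inner ℂ v ((adjoint T) y) := by
            rw [← ContinuousLinearMap.adjoint_inner_right]
        _ = 0 := h1
    exact ext_inner_right ℂ fun y => by simpa using this y
  have hkerTs : ∀ v ∈ Rᗮ, adjoint T v = 0 := by
    intro v hv
    have : ∀ y : H, inner ℂ ((adjoint T) v) y = (0 : ℂ) := by
      intro y
      have h1 : inner ℂ v (T y) = (0 : ℂ) := by
        have : T y ∈ R := LinearMap.mem_range_self _ y
        exact (Submodule.mem_orthogonal' R v).mp hv _ this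
      calc inner ℂ ((adjoint T) v) y = inner ℂ v (T y) := by
            rw [ContinuousLinearMap.adjoint_inner_left]
        _ = 0 := h1
    exact ext_inner_right ℂ fun y => by simpa using this y
  -- T maps R onto R, and so does adjoint T
  have hmapT : Submodule.map (T : H →ₗ[ℂ] H) R = R := by
    apply le_antisymm
    · rintro _ ⟨x, _, rfl⟩; exact LinearMap.mem_range_self _ x
    · intro y hy
      obtain ⟨x, rfl⟩ := hy
      obtain ⟨u, hu, v, hv, rfl⟩ := R.exists_add_mem_mem_orthogonal x
      refine ⟨u, hu, ?_⟩
      simp [map_add, hkerT v hv]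
  have hmapTs : Submodule.map ((adjoint T) : H →ₗ[ℂ] H) R = R := by
    apply le_antisymm
    · rintro _ ⟨x, _, rfl⟩
      exact hRTs ▸ LinearMap.mem_range_self _ x
    · intro y hy
      rw [← hRTs] at hy
      obtain ⟨x, rfl⟩ := hy
      obtain ⟨u, hu, v, hv, rfl⟩ := R.exists_add_mem_mem_orthogonal x
      refine ⟨u, hu, ?_⟩
      simp [map_add, hkerTs v hv]
  -- by induction, range (T ^ n) = R for n ≥ 1
  have key : ∀ (S : H →L[ℂ] H), LinearMap.range (S : H →ₗ[ℂ] H) = R →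
      Submodule.map (S : H →ₗ[ℂ] H) R = R →
      ∀ n : ℕ, 1 ≤ n → LinearMap.range ((S ^ n : H →L[ℂ] H) : H →ₗ[ℂ] H) = R := by
    intro S hS hmap n hn
    induction n with
    | zero => omega
    | succ m ih =>
      rcases Nat.eq_or_lt_of_le hn with h1 | h2
      · simpa [← h1] using hS
      · have hm : 1 ≤ m := by omega
        have ihm := ih hm
        have hpow : S ^ (m + 1) = S * S ^ m := (pow_succ' S m)
        have : LinearMap.range ((S ^ (m + 1) : H →L[ℂ] H) : H →ₗ[ℂ] H) =
            Submodule.map (S : H →ₗ[ℂ] H) (LinearMap.range ((S ^ m : H →L[ℂ] H) : H →ₗ[ℂ] H)) := by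
          rw [hpow]
          ext y
          constructor
          · rintro ⟨x, rfl⟩
            exact ⟨(S ^ m) x, LinearMap.mem_range_self _ x, rfl⟩
          · rintro ⟨_, ⟨x, rfl⟩, rfl⟩
            exact ⟨x, rfl⟩
        rw [this, ihm, hmap]
  intro n hn
  rw [key T hRT hmapT n hn, key (adjoint T) hRTs hmapTs n hn]
end

section
/- Let S be an injective unilateral weighted shift on ℓ²(ℕ) with weight sequence (ω_k), ω_k ≠ 0. Then for each n ≥ 1, S^n is posinormal if and only if sup over j ≥ 0 of (∏_{k=j+1}^{n+j}|ω_k|)/(∏_{k=n+j+1}^{2n+j}|ω_k|) < ∞; consequently, if S is posinormal (sup_k |ω_k|/|ω_{k+1}| < ∞), then S^n is posinormal for every n ≥ 1. -/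
open ContinuousLinearMap

private lemma parseval_hasSum' {H : Type*} [NormedAddCommGroup H] [InnerProductSpace ℂ H]
    [CompleteSpace H] (e : HilbertBasis ℕ ℂ H) (y : H) :
    HasSum (fun k => ‖@inner ℂ _ _ (e k) y‖ ^ 2) (‖y‖ ^ 2) := by
  have h := e.hasSum_inner_mul_inner y y
  have h2 : ∀ k : ℕ, @inner ℂ _ _ y (e k) * @inner ℂ _ _ (e k) y
      = ((‖@inner ℂ _ _ (e k) y‖ ^ 2 : ℝ) : ℂ) := by
    intro k
    rw [← inner_conj_symm y (e k), RCLike.conj_mul]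
    norm_cast
  have h3 : (@inner ℂ _ _ y y) = ((‖y‖ ^ 2 : ℝ) : ℂ) := by
    rw [inner_self_eq_norm_sq_to_K]; norm_cast
  rw [funext h2, h3] at h
  exact (RCLike.hasSum_ofReal ℂ).mp h

private lemma shift_pow_apply' {H : Type*} [NormedAddCommGroup H] [InnerProductSpace ℂ H]
    [CompleteSpace H] (e : HilbertBasis ℕ ℂ H) (ω : ℕ → ℂ) (S : H →L[ℂ] H)
    (hS : ∀ k, S (e k) = ω k • e (k + 1)) :
    ∀ n j, (S ^ n) (e j) = (∏ i ∈ Finset.range n, ω (j + i)) • e (j + n) := by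
  intro n
  induction n with
  | zero => intro j; simp
  | succ n ih =>
    intro j
    rw [pow_succ', ContinuousLinearMap.mul_apply, ih j, map_smul, hS (j + n), smul_smul,
      Finset.prod_range_succ]
    norm_num [Nat.add_assoc]

private lemma adjoint_pow_apply' {H : Type*} [NormedAddCommGroup H] [InnerProductSpace ℂ H]
    [CompleteSpace H] (e : HilbertBasis ℕ ℂ H) (ω : ℕ → ℂ) (S : H →L[ℂ] H)
    (hS : ∀ k, S (e k) = ω k • e (k + 1)) (n j : ℕ) :
    adjoint (S ^ n) (e (j + n))
      = (starRingEnd ℂ) (∏ i ∈ Finset.range n, ω (j + i)) • e j := by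
  apply e.repr.injective
  apply lp.ext
  funext k
  rw [e.repr_apply_apply, e.repr_apply_apply, adjoint_inner_right,
    shift_pow_apply' e ω S hS n k, inner_smul_left, inner_smul_right,
    orthonormal_iff_ite.mp e.orthonormal, orthonormal_iff_ite.mp e.orthonormal]
  by_cases hkj : k = j
  · subst hkj; simp
  · have h1 : ¬ (k + n = j + n) := by omega
    simp [hkj, h1]


/-- Let `S` be an injective unilateral weighted shift (`S eₖ = ωₖ e_{k+1}`, all
`ωₖ ≠ 0`) on a Hilbert space with orthonormal basis `(eₖ)`. For each `n ≥ 1`,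
`S ^ n` is posinormal iff
`sup_j (∏_{i<n} |ω_{j+i}|) / (∏_{i<n} |ω_{n+j+i}|) < ∞`; consequently, if `S` is
posinormal (`sup_k |ω_k|/|ω_{k+1}| < ∞`), then `S ^ n` is posinormal for all `n ≥ 1`. -/
theorem weighted_shift_pow_posinormal {H : Type*} [NormedAddCommGroup H]
    [InnerProductSpace ℂ H] [CompleteSpace H] (e : HilbertBasis ℕ ℂ H)
    (ω : ℕ → ℂ) (hω : ∀ k, ω k ≠ 0) (S : H →L[ℂ] H)
    (hS : ∀ k, S (e k) = ω k • e (k + 1)) :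
    (∀ n : ℕ, 1 ≤ n →
      ((∃ α : ℝ, 0 ≤ α ∧ ∀ x : H, ‖adjoint (S ^ n) x‖ ≤ α * ‖(S ^ n) x‖) ↔
        ∃ C : ℝ, ∀ j : ℕ,
          (∏ i ∈ Finset.range n, ‖ω (j + i)‖) /
            (∏ i ∈ Finset.range n, ‖ω (n + j + i)‖) ≤ C)) ∧
    ((∃ C : ℝ, ∀ k : ℕ, ‖ω k‖ / ‖ω (k + 1)‖ ≤ C) →
      ∀ n : ℕ, 1 ≤ n →
        ∃ α : ℝ, 0 ≤ α ∧ ∀ x : H, ‖adjoint (S ^ n) x‖ ≤ α * ‖(S ^ n) x‖) := by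
  have hωpos : ∀ k, 0 < ‖ω k‖ := fun k => norm_pos_iff.mpr (hω k)
  have main : ∀ n : ℕ, 1 ≤ n →
      ((∃ α : ℝ, 0 ≤ α ∧ ∀ x : H, ‖adjoint (S ^ n) x‖ ≤ α * ‖(S ^ n) x‖) ↔
        ∃ C : ℝ, ∀ j : ℕ,
          (∏ i ∈ Finset.range n, ‖ω (j + i)‖) /
            (∏ i ∈ Finset.range n, ‖ω (n + j + i)‖) ≤ C) := by
    intro n hn
    set β : ℕ → ℂ := fun j => ∏ i ∈ Finset.range n, ω (j + i) with hβ
    have hβnorm : ∀ j, ‖β j‖ = ∏ i ∈ Finset.range n, ‖ω (j + i)‖ := by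
      intro j; simp [hβ, norm_prod]
    have hβpos : ∀ j, 0 < ‖β j‖ := by
      intro j
      rw [hβnorm]
      exact Finset.prod_pos fun i _ => hωpos _
    have hpow : ∀ j, (S ^ n) (e j) = β j • e (j + n) := fun j =>
      shift_pow_apply' e ω S hS n j
    have hadj : ∀ j, adjoint (S ^ n) (e (j + n)) = (starRingEnd ℂ) (β j) • e j := fun j =>
      adjoint_pow_apply' e ω S hS n j
    have hnorme : ∀ j, ‖e j‖ = 1 := e.orthonormal.1
    constructor
    · rintro ⟨α, hα0, hα⟩
      refine ⟨α, fun j => ?_⟩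
      have h1 := hα (e (n + j))
      have hA : adjoint (S ^ n) (e (n + j)) = (starRingEnd ℂ) (β j) • e j := by
        rw [show n + j = j + n by omega]; exact hadj j
      rw [hA, hpow (n + j), norm_smul, norm_smul, RCLike.norm_conj, hnorme, hnorme,
        mul_one, mul_one] at h1
      rw [← hβnorm j, ← hβnorm (n + j), div_le_iff₀ (hβpos (n + j))]
      exact h1
    · rintro ⟨C, hC⟩
      have hC0 : 0 ≤ C := le_trans (by positivity) (hC 0)
      have hC' : ∀ j, ‖β j‖ ≤ C * ‖β (n + j)‖ := by
        intro j
        have := hC j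
        rw [← hβnorm j, ← hβnorm (n + j), div_le_iff₀ (hβpos (n + j))] at this
        linarith [this]
      refine ⟨C, hC0, fun x => ?_⟩
      have P2 := parseval_hasSum' e ((S ^ n) x)
      have P1 : HasSum (fun k => ‖β k‖ ^ 2 * ‖@inner ℂ _ _ (e (k + n)) x‖ ^ 2)
          (‖adjoint (S ^ n) x‖ ^ 2) := by
        have h := parseval_hasSum' e (adjoint (S ^ n) x)
        have h' : ∀ k : ℕ, ‖@inner ℂ _ _ (e k) (adjoint (S ^ n) x)‖ ^ 2
            = ‖β k‖ ^ 2 * ‖@inner ℂ _ _ (e (k + n)) x‖ ^ 2 := by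
          intro k
          rw [adjoint_inner_right, hpow k, inner_smul_left, norm_mul, RCLike.norm_conj,
            mul_pow]
        simp only [h'] at h
        exact h
      have coef : ∀ m : ℕ, @inner ℂ _ _ (e (m + n)) ((S ^ n) x)
          = β m * @inner ℂ _ _ (e m) x := by
        intro m
        rw [← adjoint_inner_left, hadj m, inner_smul_left, Complex.conj_conj]
      have key : ‖adjoint (S ^ n) x‖ ^ 2 ≤ C ^ 2 * ‖(S ^ n) x‖ ^ 2 := by
        have hsum2 : HasSum (fun m => C ^ 2 * ‖@inner ℂ _ _ (e m) ((S ^ n) x)‖ ^ 2)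
            (C ^ 2 * ‖(S ^ n) x‖ ^ 2) := P2.mul_left _
        rw [← P1.tsum_eq, ← hsum2.tsum_eq]
        refine Summable.tsum_le_tsum_of_inj (fun k => k + 2 * n) (add_left_injective (2 * n))
          (fun c _ => by positivity) (fun k => ?_) P1.summable hsum2.summable
        have hco : @inner ℂ _ _ (e (k + 2 * n)) ((S ^ n) x)
            = β (k + n) * @inner ℂ _ _ (e (k + n)) x := by
          have := coef (k + n)
          rwa [show k + n + n = k + 2 * n by omega] at this
        rw [hco, norm_mul, mul_pow]
        have h1 : ‖β k‖ ≤ C * ‖β (k + n)‖ := by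
          have := hC' k
          rwa [show n + k = k + n by omega] at this
        calc ‖β k‖ ^ 2 * ‖@inner ℂ _ _ (e (k + n)) x‖ ^ 2
            ≤ (C * ‖β (k + n)‖) ^ 2 * ‖@inner ℂ _ _ (e (k + n)) x‖ ^ 2 := by
              have h2 : ‖β k‖ ^ 2 ≤ (C * ‖β (k + n)‖) ^ 2 :=
                pow_le_pow_left₀ (norm_nonneg _) h1 2
              exact mul_le_mul_of_nonneg_right h2 (by positivity)
          _ = C ^ 2 * (‖β (k + n)‖ ^ 2 * ‖@inner ℂ _ _ (e (k + n)) x‖ ^ 2) := by ring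
      have h2 : ‖adjoint (S ^ n) x‖ ^ 2 ≤ (C * ‖(S ^ n) x‖) ^ 2 := by
        rw [mul_pow]; exact key
      exact (pow_le_pow_iff_left₀ (norm_nonneg _) (by positivity) two_ne_zero).mp h2
  refine ⟨main, ?_⟩
  rintro ⟨C, hC⟩ n hn
  have hCpos : 0 < C := lt_of_lt_of_le (div_pos (hωpos 0) (hωpos 1)) (hC 0)
  have hstep : ∀ k, ‖ω k‖ ≤ C * ‖ω (k + 1)‖ := fun k =>
    (div_le_iff₀ (hωpos (k + 1))).mp (hC k)
  have hiter : ∀ m k, ‖ω k‖ ≤ C ^ m * ‖ω (k + m)‖ := by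
    intro m
    induction m with
    | zero => intro k; simp
    | succ m ih =>
      intro k
      calc ‖ω k‖ ≤ C ^ m * ‖ω (k + m)‖ := ih k
        _ ≤ C ^ m * (C * ‖ω (k + m + 1)‖) := by
            exact mul_le_mul_of_nonneg_left (hstep (k + m)) (by positivity)
        _ = C ^ (m + 1) * ‖ω (k + (m + 1))‖ := by
            rw [show k + m + 1 = k + (m + 1) by omega]; ring
  refine (main n hn).mpr ⟨C ^ (n * n), fun j => ?_⟩
  have hden : 0 < ∏ i ∈ Finset.range n, ‖ω (n + j + i)‖ :=
    Finset.prod_pos fun i _ => hωpos _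
  rw [div_le_iff₀ hden]
  calc ∏ i ∈ Finset.range n, ‖ω (j + i)‖
      ≤ ∏ i ∈ Finset.range n, (C ^ n * ‖ω (n + j + i)‖) := by
        refine Finset.prod_le_prod (fun i _ => (norm_nonneg _)) (fun i _ => ?_)
        have := hiter n (j + i)
        rwa [show j + i + n = n + j + i by omega] at this
    _ = C ^ (n * n) * ∏ i ∈ Finset.range n, ‖ω (n + j + i)‖ := by
        rw [Finset.prod_mul_distrib, Finset.prod_const, Finset.card_range, ← pow_mul]
end

section
/- Let T be a posinormal bounded operator (TT* ≤ α²T*T for some α > 0) on a Hilbert space such that ran(TT*) ⊆ ran(T*T). Then T² is posinormal: ‖T*T*x‖ ≤ α²β‖TTx‖ for all x, where β is such that ‖TT*x‖ ≤ β‖T*Tx‖ for all x. -/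
open ContinuousLinearMap
open scoped InnerProductSpace

/-- If `T` is posinormal with constant `α > 0` and `‖T T* x‖ ≤ β ‖T* T x‖` for all `x`
(equivalently `ran (T T*) ⊆ ran (T* T)`), then `T²` is posinormal:
`‖T* T* x‖ ≤ α² β ‖T T x‖` for all `x`. -/
theorem sq_posinormal_of_range_mul_le {H : Type*} [NormedAddCommGroup H]
    [InnerProductSpace ℂ H] [CompleteSpace H] (T : H →L[ℂ] H) (α β : ℝ)
    (hα : 0 < α) (hpos : ∀ x : H, ‖adjoint T x‖ ≤ α * ‖T x‖)
    (hβ : ∀ x : H, ‖T (adjoint T x)‖ ≤ β * ‖adjoint T (T x)‖) :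
    ∀ x : H, ‖adjoint T (adjoint T x)‖ ≤ α ^ 2 * β * ‖T (T x)‖ := by
  intro x
  by_cases h : adjoint T (T x) = 0
  · -- then ‖T x‖² = ⟪T* T x, x⟫ = 0, so T x = 0
    have hTx : T x = 0 := by
      have : (⟪T x, T x⟫_ℂ) = 0 := by
        rw [← adjoint_inner_left, h, inner_zero_left]
      simpa [inner_self_eq_zero] using this
    have hT'x : adjoint T x = 0 := by
      have := hpos x
      rw [hTx, norm_zero, mul_zero] at this
      exact norm_le_zero_iff.mp this
    simp [hTx, hT'x]
  · have hpos' : 0 < ‖adjoint T (T x)‖ := norm_pos_iff.mpr h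
    have hβ0 : 0 ≤ β := by
      have h1 := hβ x
      nlinarith [norm_nonneg (T (adjoint T x))]
    calc ‖adjoint T (adjoint T x)‖ ≤ α * ‖T (adjoint T x)‖ := hpos _
      _ ≤ α * (β * ‖adjoint T (T x)‖) := by
          exact mul_le_mul_of_nonneg_left (hβ x) hα.le
      _ ≤ α * (β * (α * ‖T (T x)‖)) := by
          have := hpos (T x)
          gcongr
      _ = α ^ 2 * β * ‖T (T x)‖ := by ring
end

section
/- Let T be a posinormal bounded operator on a Hilbert space such that T*T and TT* commute. Then T² and T³ are posinormal. -/
open ContinuousLinearMap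

section Aux

variable {H : Type*} [NormedAddCommGroup H] [InnerProductSpace ℂ H] [CompleteSpace H]

open scoped InnerProductSpace

open Polynomial in
lemma commute_cfc_aux {x b : H →L[ℂ] H} (hb : IsSelfAdjoint b) (hx : Commute x b)
    (f : ℝ → ℝ) : Commute x (cfc f b) := by
  refine cfc_cases (fun y => Commute x y) b f (Commute.zero_right x) fun hf hb' => ?_
  suffices h : ∀ g : C(spectrum ℝ b, ℝ), Commute x (cfcHom hb' g) from h _
  intro g
  have hcont : Continuous fun g : C(spectrum ℝ b, ℝ) =>
      x * cfcHom hb' g - cfcHom hb' g * x :=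
    (continuous_const.mul (cfcHom_continuous hb')).sub
      ((cfcHom_continuous hb').mul continuous_const)
  have hclosed : IsClosed {g : C(spectrum ℝ b, ℝ) | Commute x (cfcHom hb' g)} := by
    have hset : {g : C(spectrum ℝ b, ℝ) | Commute x (cfcHom hb' g)}
        = (fun g : C(spectrum ℝ b, ℝ) => x * cfcHom hb' g - cfcHom hb' g * x) ⁻¹' {0} := by
      ext g
      simp [Commute, SemiconjBy, sub_eq_zero]
    rw [hset]
    exact isClosed_singleton.preimage hcont
  have hpoly : (polynomialFunctions (spectrum ℝ b) : Set C(spectrum ℝ b, ℝ))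
      ⊆ {g | Commute x (cfcHom hb' g)} := by
    rw [polynomialFunctions_coe]
    rintro _ ⟨p, rfl⟩
    have h1 : (toContinuousMapOnAlgHom (spectrum ℝ b) p)
        = aeval ((ContinuousMap.id ℝ).restrict (spectrum ℝ b)) p := by
      ext z
      simp
    have h2 : (cfcHom hb' (toContinuousMapOnAlgHom (spectrum ℝ b) p) : H →L[ℂ] H)
        = aeval b p := by
      rw [h1]
      have h3 := aeval_algHom_apply
        ((cfcHom hb' : C(spectrum ℝ b, ℝ) →⋆ₐ[ℝ] (H →L[ℂ] H)).toAlgHom)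
        ((ContinuousMap.id ℝ).restrict (spectrum ℝ b)) p
      simp only [StarAlgHom.coe_toAlgHom] at h3
      rw [cfcHom_id hb'] at h3
      exact h3.symm
    have haev : ∀ q : ℝ[X], Commute x (aeval b q) := by
      intro q
      induction q using Polynomial.induction_on with
      | C r => simpa [Commute, SemiconjBy] using (Algebra.commutes r x).symm
      | add p' q' hp' hq' => simpa [map_add] using hp'.add_right hq'
      | monomial n r _ =>
        simp only [map_mul, map_pow, aeval_C, aeval_X]
        exact Commute.mul_right ((Algebra.commutes r x).symm) (hx.pow_right _)
    show Commute x _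
    rw [h2]
    exact haev p
  have hdense := polynomialFunctions.topologicalClosure (spectrum ℝ b)
  have hg : g ∈ closure (polynomialFunctions (spectrum ℝ b) : Set C(spectrum ℝ b, ℝ)) := by
    have hmem : g ∈ (polynomialFunctions (spectrum ℝ b)).topologicalClosure := by
      rw [hdense]; trivial
    exact hmem
  exact hclosed.closure_subset_iff.mpr hpoly hg

lemma pow_le_pow_of_commute_aux {a b : H →L[ℂ] H} (ha : 0 ≤ a) (hb : 0 ≤ b) (hba : b ≤ a)
    (hab : Commute a b) : b ^ 2 ≤ a ^ 2 ∧ b ^ 3 ≤ a ^ 3 := by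
  have hbsa : IsSelfAdjoint b := .of_nonneg hb
  have hasa : IsSelfAdjoint a := .of_nonneg ha
  set s := cfc Real.sqrt b with hs
  set t := cfc Real.sqrt a with ht
  have hssa : IsSelfAdjoint s := cfc_predicate Real.sqrt b
  have htsa : IsSelfAdjoint t := cfc_predicate Real.sqrt a
  have hss : s * s = b := by
    rw [hs, ← cfc_mul Real.sqrt Real.sqrt b Real.continuous_sqrt.continuousOn
      Real.continuous_sqrt.continuousOn]
    have h1 : cfc (fun x => Real.sqrt x * Real.sqrt x) b = cfc (fun x : ℝ => x) b :=
      cfc_congr fun r hr => Real.mul_self_sqrt (spectrum_nonneg_of_nonneg hb hr)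
    rw [h1, cfc_id' ℝ b]
  have htt : t * t = a := by
    rw [ht, ← cfc_mul Real.sqrt Real.sqrt a Real.continuous_sqrt.continuousOn
      Real.continuous_sqrt.continuousOn]
    have h1 : cfc (fun x => Real.sqrt x * Real.sqrt x) a = cfc (fun x : ℝ => x) a :=
      cfc_congr fun r hr => Real.mul_self_sqrt (spectrum_nonneg_of_nonneg ha hr)
    rw [h1, cfc_id' ℝ a]
  have hsb : Commute b s := commute_cfc_aux hbsa (Commute.refl b) _
  have hsa : Commute a s := commute_cfc_aux hbsa hab _
  have htb : Commute b t := commute_cfc_aux hasa hab.symm _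
  have hta : Commute a t := commute_cfc_aux hasa (Commute.refl a) _
  have h1 : b ^ 2 ≤ a * b := by
    have hc := star_left_conjugate_le_conjugate hba s
    rw [hssa.star_eq] at hc
    have e1 : s * b * s = b ^ 2 := by
      rw [← hsb.eq, mul_assoc, hss, pow_two]
    have e2 : s * a * s = a * b := by
      rw [← hsa.eq, mul_assoc, hss]
    rwa [e1, e2] at hc
  have h2 : a * b ≤ a ^ 2 := by
    have hc := star_left_conjugate_le_conjugate hba t
    rw [htsa.star_eq] at hc
    have e1 : t * b * t = a * b := by
      rw [← htb.eq, mul_assoc, htt, ← hab.eq]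
    have e2 : t * a * t = a ^ 2 := by
      rw [← hta.eq, mul_assoc, htt, pow_two]
    rwa [e1, e2] at hc
  have hsq : b ^ 2 ≤ a ^ 2 := h1.trans h2
  have h3 : b ^ 3 ≤ a ^ 2 * b := by
    have hc := star_left_conjugate_le_conjugate hsq s
    rw [hssa.star_eq] at hc
    have e1 : s * b ^ 2 * s = b ^ 3 := by
      rw [← (hsb.pow_left 2).eq, mul_assoc, hss, ← pow_succ]
    have e2 : s * a ^ 2 * s = a ^ 2 * b := by
      rw [← (hsa.pow_left 2).eq, mul_assoc, hss]
    rwa [e1, e2] at hc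
  have h4 : a ^ 2 * b ≤ a ^ 3 := by
    have hc := star_left_conjugate_le_conjugate hba a
    rw [hasa.star_eq] at hc
    have e1 : a * b * a = a ^ 2 * b := by
      rw [mul_assoc, hab.symm.eq, ← mul_assoc, ← pow_two]
    have e2 : a * a * a = a ^ 3 := by
      rw [← pow_two, ← pow_succ]
    rwa [e1, e2] at hc
  exact ⟨hsq, h3.trans h4⟩

lemma re_coe_mul_aux (r : ℝ) (z : ℂ) : RCLike.re ((r : ℂ) * z) = r * RCLike.re z := by simp

lemma conj_coe_aux (r : ℝ) : (starRingEnd ℂ) ((r : ℝ) : ℂ) = ((r : ℝ) : ℂ) := by simp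

open RCLike in
lemma re_inner_le_of_le {P Q : H →L[ℂ] H} (h : P ≤ Q) (x : H) :
    re ⟪P x, x⟫_ℂ ≤ re ⟪Q x, x⟫_ℂ := by
  have h1 := ((le_def P Q).mp h).2 x
  rw [reApplyInnerSelf_apply] at h1
  simp only [sub_apply, inner_sub_left, map_sub] at h1
  linarith

end Aux

set_option maxHeartbeats 1000000 in
open scoped InnerProductSpace in
/-- If `T` is posinormal and `T* T` commutes with `T T*`, then `T²` and `T³` are
posinormal. -/
theorem sq_cube_posinormal_of_commute {H : Type*} [NormedAddCommGroup H]
    [InnerProductSpace ℂ H] [CompleteSpace H] (T : H →L[ℂ] H)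
    (hpos : ∃ α : ℝ, 0 ≤ α ∧ ∀ x : H, ‖adjoint T x‖ ≤ α * ‖T x‖)
    (hcomm : (adjoint T ∘L T) ∘L (T ∘L adjoint T)
      = (T ∘L adjoint T) ∘L (adjoint T ∘L T)) :
    (∃ γ : ℝ, 0 ≤ γ ∧ ∀ x : H, ‖(adjoint T ^ 2) x‖ ≤ γ * ‖(T ^ 2) x‖) ∧
    (∃ γ : ℝ, 0 ≤ γ ∧ ∀ x : H, ‖(adjoint T ^ 3) x‖ ≤ γ * ‖(T ^ 3) x‖) := by
  obtain ⟨α, hα0, hT⟩ := hpos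
  set S : H →L[ℂ] H := adjoint T with hS
  set A : H →L[ℂ] H := S * T with hA
  set B : H →L[ℂ] H := T * S with hB
  have hApos : (0 : H →L[ℂ] H) ≤ A := by
    simpa [hA, hS, star_eq_adjoint] using star_mul_self_nonneg T
  have hBpos : (0 : H →L[ℂ] H) ≤ B := by
    simpa [hB, hS, star_eq_adjoint] using mul_star_self_nonneg T
  have hcom : Commute A B := by
    show A * B = B * A
    rw [hA, hB]
    simpa only [ContinuousLinearMap.mul_def] using hcomm
  set c : ℝ := α ^ 2 with hc
  have hc0 : 0 ≤ c := sq_nonneg α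
  have hAsa : IsSelfAdjoint A := .of_nonneg hApos
  have hBsa : IsSelfAdjoint B := .of_nonneg hBpos
  have hinnerA : ∀ x : H, RCLike.re ⟪A x, x⟫_ℂ = ‖T x‖ ^ 2 := by
    intro x
    have hax : (A x : H) = adjoint T (T x) := rfl
    rw [hax, adjoint_inner_left, inner_self_eq_norm_sq]
  have hinnerB : ∀ x : H, RCLike.re ⟪B x, x⟫_ℂ = ‖S x‖ ^ 2 := by
    intro x
    have hbx : (B x : H) = T (S x) := rfl
    rw [hbx, hS, ← adjoint_inner_right, inner_self_eq_norm_sq]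
  have hcA_sa : IsSelfAdjoint ((c : ℂ) • A) := by
    rw [IsSelfAdjoint, star_smul, hAsa.star_eq]
    simp
  have hcApos : (0 : H →L[ℂ] H) ≤ (c : ℂ) • A := by
    rw [nonneg_iff_isPositive]
    refine ⟨isSelfAdjoint_iff_isSymmetric.mp hcA_sa, fun x => ?_⟩
    rw [reApplyInnerSelf_apply]
    have hax : (((c : ℂ) • A) x : H) = (c : ℂ) • (A x) := rfl
    rw [hax, inner_smul_left, conj_coe_aux, re_coe_mul_aux, hinnerA]
    positivity
  have hBA : B ≤ (c : ℂ) • A := by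
    rw [le_def]
    refine ⟨isSelfAdjoint_iff_isSymmetric.mp (hcA_sa.sub hBsa), fun x => ?_⟩
    rw [reApplyInnerSelf_apply]
    have hax : (((c : ℂ) • A - B) x : H) = (c : ℂ) • (A x) - B x := rfl
    rw [hax, inner_sub_left, map_sub, inner_smul_left, conj_coe_aux, re_coe_mul_aux,
      hinnerA, hinnerB]
    have h := hT x
    nlinarith [norm_nonneg (S x), norm_nonneg (T x)]
  have hcomc : Commute ((c : ℂ) • A) B := hcom.smul_left (c : ℂ)
  obtain ⟨h2, h3⟩ := pow_le_pow_of_commute_aux hcApos hBpos hBA hcomc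
  rw [smul_pow] at h2 h3
  have hN2 : ∀ y : H, ‖B y‖ ≤ c * ‖A y‖ := by
    intro y
    have h := re_inner_le_of_le h2 y
    have e1 : RCLike.re ⟪(B ^ 2) y, y⟫_ℂ = ‖B y‖ ^ 2 := by
      have hby : ((B ^ 2) y : H) = B (B y) := by rw [pow_two]; rfl
      rw [hby]
      nth_rewrite 1 [← hBsa.adjoint_eq]
      rw [adjoint_inner_left, inner_self_eq_norm_sq]
    have e2 : RCLike.re ⟪((c : ℂ) ^ 2 • A ^ 2) y, y⟫_ℂ = c ^ 2 * ‖A y‖ ^ 2 := by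
      have hay : (((c : ℂ) ^ 2 • A ^ 2) y : H) = (c : ℂ) ^ 2 • (A (A y)) := by rw [pow_two]; rfl
      have hc2 : ((c : ℂ)) ^ 2 = ((c ^ 2 : ℝ) : ℂ) := by push_cast; ring
      rw [hay, hc2, inner_smul_left, conj_coe_aux, re_coe_mul_aux]
      nth_rewrite 1 [← hAsa.adjoint_eq]
      rw [adjoint_inner_left, inner_self_eq_norm_sq]
    rw [e1, e2] at h
    nlinarith [norm_nonneg (B y), norm_nonneg (A y), mul_nonneg hc0 (norm_nonneg (A y))]
  -- second key inequality : ‖A (S x)‖ ≤ α ^ 3 * ‖B (T x)‖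
  have hN3 : ∀ x : H, ‖A (S x)‖ ≤ α ^ 3 * ‖B (T x)‖ := by
    intro x
    have h := re_inner_le_of_le h3 x
    have eB3 : (B ^ 3 : H →L[ℂ] H) = T * (A ^ 2) * S := by
      rw [hA, hB]
      simp only [pow_succ, pow_zero, one_mul, mul_assoc]
    have eA3 : (A ^ 3 : H →L[ℂ] H) = S * (B ^ 2) * T := by
      rw [hA, hB]
      simp only [pow_succ, pow_zero, one_mul, mul_assoc]
    have e1 : RCLike.re ⟪(B ^ 3) x, x⟫_ℂ = ‖A (S x)‖ ^ 2 := by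
      rw [eB3]
      have hax : ((T * A ^ 2 * S) x : H) = T (A (A (S x))) := by
        simp only [mul_apply, pow_two]
        rfl
      rw [hax, ← adjoint_inner_right, ← hS]
      nth_rewrite 1 [← hAsa.adjoint_eq]
      rw [adjoint_inner_left, inner_self_eq_norm_sq]
    have e2 : RCLike.re ⟪((c : ℂ) ^ 3 • A ^ 3) x, x⟫_ℂ = c ^ 3 * ‖B (T x)‖ ^ 2 := by
      rw [eA3]
      have hax : (((c : ℂ) ^ 3 • (S * B ^ 2 * T)) x : H) = (c : ℂ) ^ 3 • (S (B (B (T x)))) := by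
        simp only [coe_smul', Pi.smul_apply, mul_apply, pow_two]
        rfl
      have hc3' : ((c : ℂ)) ^ 3 = ((c ^ 3 : ℝ) : ℂ) := by push_cast; ring
      rw [hax, hc3', inner_smul_left, conj_coe_aux, re_coe_mul_aux, hS,
        adjoint_inner_left]
      nth_rewrite 1 [← hBsa.adjoint_eq]
      rw [adjoint_inner_left, inner_self_eq_norm_sq]
    rw [e1, e2] at h
    have hc3 : c ^ 3 = (α ^ 3) ^ 2 := by rw [hc]; ring
    rw [hc3] at h
    nlinarith [norm_nonneg (A (S x)), norm_nonneg (B (T x)), pow_nonneg hα0 3,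
      mul_nonneg (pow_nonneg hα0 3) (norm_nonneg (B (T x)))]
  constructor
  · refine ⟨α ^ 4, by positivity, fun x => ?_⟩
    have hg1 : ((adjoint T ^ 2) x : H) = S (S x) := by
      rw [← hS, pow_two]; rfl
    have hg2 : ((T ^ 2) x : H) = T (T x) := by rw [pow_two]; rfl
    rw [hg1, hg2]
    have e1 : ‖S (S x)‖ ≤ α * ‖B x‖ := by
      have h := hT (S x)
      have hbx : (B x : H) = T (S x) := rfl
      rw [hbx]
      exact h
    have e2 : ‖B x‖ ≤ c * ‖A x‖ := hN2 x
    have e3 : ‖A x‖ ≤ α * ‖T (T x)‖ := by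
      have h := hT (T x)
      have hax : (A x : H) = S (T x) := rfl
      rw [hax]
      exact h
    calc ‖S (S x)‖ ≤ α * ‖B x‖ := e1
      _ ≤ α * (c * ‖A x‖) := by
        exact mul_le_mul_of_nonneg_left e2 hα0
      _ ≤ α * (c * (α * ‖T (T x)‖)) := by
        exact mul_le_mul_of_nonneg_left (mul_le_mul_of_nonneg_left e3 hc0) hα0
      _ = α ^ 4 * ‖T (T x)‖ := by rw [hc]; ring
  · refine ⟨α ^ 9, by positivity, fun x => ?_⟩
    have hg1 : ((adjoint T ^ 3) x : H) = S (S (S x)) := by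
      rw [← hS]
      simp only [pow_succ, pow_zero, one_mul, mul_apply]
      rfl
    have hg2 : ((T ^ 3) x : H) = T (T (T x)) := by
      simp only [pow_succ, pow_zero, one_mul, mul_apply]
      rfl
    rw [hg1, hg2]
    have e1 : ‖S (S (S x))‖ ≤ α * ‖B (S x)‖ := by
      have h := hT (S (S x))
      have hbx : (B (S x) : H) = T (S (S x)) := rfl
      rw [hbx]
      exact h
    have e2 : ‖B (S x)‖ ≤ c * ‖A (S x)‖ := hN2 (S x)
    have e3 : ‖A (S x)‖ ≤ α ^ 3 * ‖B (T x)‖ := hN3 x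
    have e4 : ‖B (T x)‖ ≤ c * ‖A (T x)‖ := hN2 (T x)
    have e5 : ‖A (T x)‖ ≤ α * ‖T (T (T x))‖ := by
      have h := hT (T (T x))
      have hax : (A (T x) : H) = S (T (T x)) := rfl
      rw [hax]
      exact h
    have hα3 : (0 : ℝ) ≤ α ^ 3 := by positivity
    calc ‖S (S (S x))‖ ≤ α * ‖B (S x)‖ := e1
      _ ≤ α * (c * ‖A (S x)‖) := mul_le_mul_of_nonneg_left e2 hα0
      _ ≤ α * (c * (α ^ 3 * ‖B (T x)‖)) :=
        mul_le_mul_of_nonneg_left (mul_le_mul_of_nonneg_left e3 hc0) hα0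
      _ ≤ α * (c * (α ^ 3 * (c * ‖A (T x)‖))) :=
        mul_le_mul_of_nonneg_left (mul_le_mul_of_nonneg_left
          (mul_le_mul_of_nonneg_left e4 hα3) hc0) hα0
      _ ≤ α * (c * (α ^ 3 * (c * (α * ‖T (T (T x))‖)))) :=
        mul_le_mul_of_nonneg_left (mul_le_mul_of_nonneg_left
          (mul_le_mul_of_nonneg_left (mul_le_mul_of_nonneg_left e5 hc0) hα3) hc0) hα0
      _ = α ^ 9 * ‖T (T (T x))‖ := by rw [hc]; ring
end

section
/- If S and T are posinormal bounded operators on a Hilbert space and S* commutes with T (TS* = S*T), then ST is posinormal: ‖(ST)*x‖ ≤ α_T α_S ‖STx‖ for all x. -/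
open ContinuousLinearMap

/-- If `S` and `T` are posinormal with constants `αS`, `αT` and `S*` commutes with `T`,
then `S T` is posinormal: `‖(S T)* x‖ ≤ αT * αS * ‖(S T) x‖`. -/
theorem mul_posinormal_of_adjoint_commute {H : Type*} [NormedAddCommGroup H]
    [InnerProductSpace ℂ H] [CompleteSpace H] (S T : H →L[ℂ] H) (αS αT : ℝ)
    (hS : 0 ≤ αS) (hT : 0 ≤ αT)
    (hSpos : ∀ x : H, ‖adjoint S x‖ ≤ αS * ‖S x‖)
    (hTpos : ∀ x : H, ‖adjoint T x‖ ≤ αT * ‖T x‖)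
    (hcomm : T ∘L adjoint S = adjoint S ∘L T) :
    ∀ x : H, ‖adjoint (S ∘L T) x‖ ≤ αT * αS * ‖(S ∘L T) x‖ := by
  intro x
  rw [adjoint_comp]
  calc ‖(adjoint T ∘L adjoint S) x‖ = ‖adjoint T (adjoint S x)‖ := rfl
    _ ≤ αT * ‖T (adjoint S x)‖ := hTpos _
    _ = αT * ‖adjoint S (T x)‖ := by
        congr 1
        have := congrArg (fun f => f x) hcomm
        simpa using congrArg norm this
    _ ≤ αT * (αS * ‖S (T x)‖) := by
        exact mul_le_mul_of_nonneg_left (hSpos _) hT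
    _ = αT * αS * ‖(S ∘L T) x‖ := by ring_nf; rfl
end

section
/- If T is a quasiposinormal bounded operator on a Hilbert space (ker(T) ⊆ ker(T*)), then T^n is quasiposinormal for every n ≥ 1: ker(T^n) ⊆ ker(T*^n). In fact ker(T^n) = ker(T) for all n ≥ 1. -/
open ContinuousLinearMap

/-- If `T` is quasiposinormal (`ker T ⊆ ker T*`), then `T ^ n` is quasiposinormal for
every `n ≥ 1`, and in fact `ker (T ^ n) = ker T`. -/
theorem pow_quasiposinormal {H : Type*} [NormedAddCommGroup H]
    [InnerProductSpace ℂ H] [CompleteSpace H] (T : H →L[ℂ] H)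
    (h : LinearMap.ker (T : H →ₗ[ℂ] H) ≤ LinearMap.ker ((adjoint T : H →L[ℂ] H) : H →ₗ[ℂ] H)) :
    ∀ n : ℕ, 1 ≤ n →
      LinearMap.ker ((T ^ n : H →L[ℂ] H) : H →ₗ[ℂ] H) ≤
        LinearMap.ker (((adjoint T) ^ n : H →L[ℂ] H) : H →ₗ[ℂ] H) ∧
      LinearMap.ker ((T ^ n : H →L[ℂ] H) : H →ₗ[ℂ] H) = LinearMap.ker (T : H →ₗ[ℂ] H) := by
  have key : ∀ x : H, T (T x) = 0 → T x = 0 := by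
    intro x hx
    have h1 : adjoint T (T x) = 0 := h hx
    have h2 : (inner ℂ (T x) (T x) : ℂ) = 0 := by
      rw [← ContinuousLinearMap.adjoint_inner_left, h1, inner_zero_left]
    exact inner_self_eq_zero.mp h2
  have hker : ∀ n : ℕ, 1 ≤ n → LinearMap.ker ((T ^ n : H →L[ℂ] H) : H →ₗ[ℂ] H) = LinearMap.ker (T : H →ₗ[ℂ] H) := by
    intro n hn
    induction n with
    | zero => omega
    | succ m ih =>
      rcases Nat.eq_zero_or_pos m with hm | hm
      · subst hm; simp
      · have ihm := ih hm
        apply le_antisymm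
        · intro x hx
          have hx1 : (T ^ m) (T x) = 0 := by
            have h0 : (T ^ (m + 1)) x = 0 := hx
            rw [pow_succ] at h0
            simpa using h0
          have hx2 : T x ∈ LinearMap.ker ((T ^ m : H →L[ℂ] H) : H →ₗ[ℂ] H) := hx1
          rw [ihm] at hx2
          exact key x hx2
        · intro x hx
          have hx' : T x = 0 := hx
          show (T ^ (m + 1)) x = 0
          rw [pow_succ]
          simp [hx']
  intro n hn
  refine ⟨?_, hker n hn⟩
  rw [hker n hn]
  intro x hx
  have hx' : adjoint T x = 0 := h hx
  show ((adjoint T) ^ n) x = 0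
  cases n with
  | zero => omega
  | succ m =>
    rw [pow_succ]
    simp [hx']
end
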